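/- Let L be a positive semidefinite linear functional on a unital commutative ℝ-algebra A which is v-bounded for a submultiplicative function v : A → [0,∞). Then for all a, b ∈ A, L(a²b²) ≤ v(a)²·L(b²); equivalently, the functional x ↦ L((v(a)² − a²)·x) is positive semidefinite for every a ∈ A. -/

import Mathlib

variable {A : Type*} [CommRing A] [Algebra ℝ A]

/-- Cauchy–Schwarz for a positive semidefinite linear functional. -/
lemma cs_aux (L : A →ₗ[ℝ] ℝ) (hpsd : ∀ x : A, 0 ≤ L (x ^ 2)) (x y : A) :
    L (x * y) ^ 2 ≤ L (x ^ 2) * L (y ^ 2) := by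
  have h : ∀ t : ℝ, 0 ≤ L (y ^ 2) * (t * t) + (2 * L (x * y)) * t + L (x ^ 2) := by
    intro t
    have hp := hpsd (algebraMap ℝ A t * y + x)
    have e : (algebraMap ℝ A t * y + x) ^ 2 =
        algebraMap ℝ A (t ^ 2) * y ^ 2 + algebraMap ℝ A (2 * t) * (x * y) + x ^ 2 := by
      simp only [map_pow, map_mul, map_ofNat]
      ring
    rw [e, ← Algebra.smul_def, ← Algebra.smul_def, map_add, map_add, map_smul, map_smul,
      smul_eq_mul, smul_eq_mul] at hp
    nlinarith [hp]
  have hd := discrim_le_zero h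
  simp only [discrim] at hd
  nlinarith [hd]

theorem stmt4 (L : A →ₗ[ℝ] ℝ) (hpsd : ∀ x : A, 0 ≤ L (x ^ 2))
    (v : A → ℝ) (hv0 : ∀ a : A, 0 ≤ v a)
    (hvm : ∀ a b : A, v (a * b) ≤ v a * v b) (hv1 : v 1 = 1)
    (C : ℝ) (hC : 0 < C) (hbd : ∀ a : A, |L a| ≤ C * v a) :
    ∀ a : A, (∀ b : A, L (a ^ 2 * b ^ 2) ≤ (v a) ^ 2 * L (b ^ 2)) ∧
      (∀ x : A, 0 ≤ L ((algebraMap ℝ A ((v a) ^ 2) - a ^ 2) * x ^ 2)) := by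
  have vpow : ∀ (a : A) (n : ℕ), v (a ^ n) ≤ v a ^ n := by
    intro a n
    induction n with
    | zero => simp [hv1]
    | succ n ih =>
        calc v (a ^ (n + 1)) = v (a ^ n * a) := by rw [pow_succ]
          _ ≤ v (a ^ n) * v a := hvm _ _
          _ ≤ v a ^ n * v a := by
              exact mul_le_mul_of_nonneg_right ih (hv0 a)
          _ = v a ^ (n + 1) := (pow_succ _ _).symm
  intro a
  have key : ∀ b : A, L (a ^ 2 * b ^ 2) ≤ (v a) ^ 2 * L (b ^ 2) := by
    intro b
    have hab2 : (0 : ℝ) ≤ L (a ^ 2 * b ^ 2) := by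
      have := hpsd (a * b); rwa [mul_pow] at this
    by_cases hb : L (b ^ 2) = 0
    · -- degenerate case: L(b²)=0 forces L(a²b²)=0
      have h1 := cs_aux L hpsd (a ^ 2 * b) b
      have e1 : a ^ 2 * b * b = a ^ 2 * b ^ 2 := by ring
      rw [e1, hb, mul_zero] at h1
      have : L (a ^ 2 * b ^ 2) = 0 := by nlinarith [h1, hab2]
      rw [this, hb, mul_zero]
    · have hbpos : 0 < L (b ^ 2) := lt_of_le_of_ne (hpsd b) (Ne.symm hb)
      -- iterated Cauchy–Schwarz
      have Q : ∀ n : ℕ, L (a ^ 2 * b ^ 2) ^ (2 ^ n) * L (b ^ 2) ≤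
          L (a ^ (2 ^ (n + 1)) * b ^ 2) * L (b ^ 2) ^ (2 ^ n) := by
        intro n
        induction n with
        | zero => simp
        | succ n ih =>
            have h1 : 0 ≤ L (a ^ 2 * b ^ 2) ^ (2 ^ n) * L (b ^ 2) :=
              mul_nonneg (pow_nonneg hab2 _) (hpsd b)
            have h2 := mul_self_le_mul_self h1 ih
            have h3 := cs_aux L hpsd (a ^ (2 ^ (n + 1)) * b) b
            have e1 : a ^ (2 ^ (n + 1)) * b * b = a ^ (2 ^ (n + 1)) * b ^ 2 := by ring
            have e2 : (a ^ (2 ^ (n + 1)) * b) ^ 2 = a ^ (2 ^ (n + 2)) * b ^ 2 := by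
              rw [mul_pow, ← pow_mul, pow_succ 2 (n + 1)]
            rw [e1, e2] at h3
            have hx : ∀ x : ℝ, x ^ (2 ^ n) * x ^ (2 ^ n) = x ^ (2 ^ (n + 1)) := by
              intro x; rw [← pow_add, pow_succ 2 n, mul_two]
            have hLL : 0 ≤ L (a ^ (2 ^ (n + 1)) * b ^ 2) := by
              have := hpsd (a ^ (2 ^ n) * b)
              have e3 : (a ^ (2 ^ n) * b) ^ 2 = a ^ (2 ^ (n + 1)) * b ^ 2 := by
                rw [mul_pow, ← pow_mul, pow_succ 2 n]
              rwa [e3] at this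
            have hbn : 0 ≤ L (b ^ 2) ^ (2 ^ (n + 1)) := pow_nonneg (hpsd b) _
            -- from h2 and h3 conclude
            have h4 : L (a ^ 2 * b ^ 2) ^ (2 ^ (n + 1)) * (L (b ^ 2) * L (b ^ 2)) ≤
                L (a ^ (2 ^ (n + 2)) * b ^ 2) * L (b ^ 2) ^ (2 ^ (n + 1)) * L (b ^ 2) := by
              calc L (a ^ 2 * b ^ 2) ^ (2 ^ (n + 1)) * (L (b ^ 2) * L (b ^ 2))
                  = (L (a ^ 2 * b ^ 2) ^ (2 ^ n) * L (b ^ 2)) *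
                    (L (a ^ 2 * b ^ 2) ^ (2 ^ n) * L (b ^ 2)) := by rw [← hx]; ring
                _ ≤ (L (a ^ (2 ^ (n + 1)) * b ^ 2) * L (b ^ 2) ^ (2 ^ n)) *
                    (L (a ^ (2 ^ (n + 1)) * b ^ 2) * L (b ^ 2) ^ (2 ^ n)) := h2
                _ = L (a ^ (2 ^ (n + 1)) * b ^ 2) ^ 2 * L (b ^ 2) ^ (2 ^ (n + 1)) := by
                    rw [← hx]; ring
                _ ≤ (L (a ^ (2 ^ (n + 2)) * b ^ 2) * L (b ^ 2)) * L (b ^ 2) ^ (2 ^ (n + 1)) :=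
                    mul_le_mul_of_nonneg_right h3 hbn
                _ = L (a ^ (2 ^ (n + 2)) * b ^ 2) * L (b ^ 2) ^ (2 ^ (n + 1)) * L (b ^ 2) := by
                    ring
            have := le_of_mul_le_mul_right (by linarith [h4] :
              (L (a ^ 2 * b ^ 2) ^ (2 ^ (n + 1)) * L (b ^ 2)) * L (b ^ 2) ≤
              (L (a ^ (2 ^ (n + 2)) * b ^ 2) * L (b ^ 2) ^ (2 ^ (n + 1))) * L (b ^ 2)) hbpos
            exact this
      -- bound the iterate using v-boundedness
      have bound : ∀ n : ℕ, L (a ^ 2 * b ^ 2) ^ (2 ^ n) * L (b ^ 2) ≤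
          (C * v b ^ 2) * ((v a ^ 2 * L (b ^ 2)) ^ (2 ^ n)) := by
        intro n
        have hvb2 : v (b ^ 2) ≤ v b ^ 2 := vpow b 2
        have hLb : L (a ^ (2 ^ (n + 1)) * b ^ 2) ≤ C * (v a ^ (2 ^ (n + 1)) * v b ^ 2) := by
          calc L (a ^ (2 ^ (n + 1)) * b ^ 2) ≤ |L (a ^ (2 ^ (n + 1)) * b ^ 2)| := le_abs_self _
            _ ≤ C * v (a ^ (2 ^ (n + 1)) * b ^ 2) := hbd _
            _ ≤ C * (v (a ^ (2 ^ (n + 1))) * v (b ^ 2)) :=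
                mul_le_mul_of_nonneg_left (hvm _ _) hC.le
            _ ≤ C * (v a ^ (2 ^ (n + 1)) * v b ^ 2) := by
                apply mul_le_mul_of_nonneg_left _ hC.le
                exact mul_le_mul (vpow a _) hvb2 (hv0 _) (pow_nonneg (hv0 a) _)
        have hbn : 0 ≤ L (b ^ 2) ^ (2 ^ n) := pow_nonneg (hpsd b) _
        calc L (a ^ 2 * b ^ 2) ^ (2 ^ n) * L (b ^ 2)
            ≤ L (a ^ (2 ^ (n + 1)) * b ^ 2) * L (b ^ 2) ^ (2 ^ n) := Q n
          _ ≤ (C * (v a ^ (2 ^ (n + 1)) * v b ^ 2)) * L (b ^ 2) ^ (2 ^ n) :=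
              mul_le_mul_of_nonneg_right hLb hbn
          _ = (C * v b ^ 2) * ((v a ^ 2 * L (b ^ 2)) ^ (2 ^ n)) := by
              rw [mul_pow, ← pow_mul, pow_succ 2 n, Nat.mul_comm (2 ^ n) 2, pow_mul]
              ring
      -- conclude by a boundedness-of-powers argument
      by_contra hlt
      push_neg at hlt
      set s : ℝ := v a ^ 2 * L (b ^ 2) with hs
      set t : ℝ := L (a ^ 2 * b ^ 2) with ht
      have hs0 : 0 ≤ s := mul_nonneg (pow_nonneg (hv0 a) 2) (hpsd b)
      rcases eq_or_lt_of_le hs0 with hseq | hspos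
      · have h0 := bound 0
        simp only [pow_zero, pow_one] at h0
        rw [← hseq, mul_zero] at h0
        have htpos : 0 < t := by rw [← hseq] at hlt; exact hlt
        nlinarith [mul_pos htpos hbpos, h0]
      · have hr1 : 1 < t / s := (one_lt_div hspos).mpr hlt
        have hK : ∀ n : ℕ, (t / s) ^ (2 ^ n) ≤ C * v b ^ 2 / L (b ^ 2) := by
          intro n
          rw [div_pow, div_le_div_iff₀ (pow_pos hspos _) hbpos]
          exact bound n
        obtain ⟨n, hn⟩ := pow_unbounded_of_one_lt (C * v b ^ 2 / L (b ^ 2)) hr1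
        have h2n : (t / s) ^ n ≤ (t / s) ^ (2 ^ n) :=
          pow_le_pow_right₀ hr1.le (Nat.le_of_lt n.lt_two_pow_self)
        linarith [hK n, hn, h2n]
  refine ⟨key, fun x => ?_⟩
  have e : (algebraMap ℝ A ((v a) ^ 2) - a ^ 2) * x ^ 2 =
      ((v a) ^ 2) • (x ^ 2) - a ^ 2 * x ^ 2 := by
    rw [sub_mul, Algebra.smul_def]
  rw [e, map_sub, map_smul, smul_eq_mul]
  linarith [key x]
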